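/- Let Q ≥ 2 and L' = 8n·⌈Q⌉^{2n} for a positive integer n. Let D_0, D_1 be disjoint sets of at most n edges each, with distinct primes q_e ≤ Q assigned to the edges, and integers ℓ_e such that (1+1/L')^{ℓ_e} is a (1+1/L')-multiplicative approximation of q_e. If ∏_{e∈D_0} q_e > ∏_{e∈D_1} q_e, then Σ_{e∈D_0} ℓ_e > Σ_{e∈D_1} ℓ_e. -/
import Mathlib


open Finset Real

/-- Degeneracy removal: with `L' = 8n⌈Q⌉^{2n}` and exponents `ℓ_e` such that
`(1+1/L')^{ℓ_e}` multiplicatively `(1+1/L')`-approximates the distinct primes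
`q_e ≤ Q`, a strict inequality between the prime products over `D_0` and `D_1`
implies the corresponding strict inequality between the exponent sums. -/
theorem stmt_14 {α : Type*} [DecidableEq α] (n : ℕ) (hn : 1 ≤ n)
    (Q : ℝ) (hQ : 2 ≤ Q)
    (L' : ℕ) (hL' : L' = 8 * n * (⌈Q⌉₊) ^ (2 * n))
    (D0 D1 : Finset α) (hdisj : Disjoint D0 D1)
    (hcard0 : D0.card ≤ n) (hcard1 : D1.card ≤ n)
    (q : α → ℕ)
    (hprime : ∀ e ∈ D0 ∪ D1, Nat.Prime (q e))
    (hqQ : ∀ e ∈ D0 ∪ D1, (q e : ℝ) ≤ Q)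
    (hinj : ∀ e ∈ D0 ∪ D1, ∀ e' ∈ D0 ∪ D1, q e = q e' → e = e')
    (ℓ : α → ℤ)
    (happrox : ∀ e ∈ D0 ∪ D1,
      (q e : ℝ) / (1 + 1 / (L' : ℝ)) ≤ (1 + 1 / (L' : ℝ)) ^ (ℓ e) ∧
      ((1 + 1 / (L' : ℝ)) ^ (ℓ e) : ℝ) ≤ (q e : ℝ) * (1 + 1 / (L' : ℝ)))
    (hprod : ∏ e ∈ D1, q e < ∏ e ∈ D0, q e) :
    ∑ e ∈ D1, ℓ e < ∑ e ∈ D0, ℓ e := by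
  -- basic facts
  have hceil2 : 2 ≤ ⌈Q⌉₊ := by
    have h := Nat.le_ceil Q
    exact_mod_cast (hQ.trans h)
  have hL'pos : 0 < L' := by
    rw [hL']; positivity
  set t : ℝ := 1 + 1 / (L' : ℝ) with ht
  have hL'R : (0:ℝ) < (L' : ℝ) := by exact_mod_cast hL'pos
  have ht1 : 1 < t := by
    rw [ht]; linarith [one_div_pos.mpr hL'R]
  have ht0 : 0 < t := lt_trans one_pos ht1
  -- rewrite zpow over sums via rpow
  have hzs : ∀ s : Finset α, (∏ e ∈ s, t ^ (ℓ e)) = t ^ (∑ e ∈ s, ℓ e) := by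
    intro s
    have h1 : (∏ e ∈ s, t ^ (ℓ e)) = ∏ e ∈ s, t ^ ((ℓ e : ℝ)) := by
      refine Finset.prod_congr rfl fun e _ => ?_
      rw [Real.rpow_intCast]
    rw [h1, ← Real.rpow_sum_of_pos ht0]
    rw [show (∑ e ∈ s, ((ℓ e : ℝ))) = ((∑ e ∈ s, ℓ e : ℤ) : ℝ) by push_cast; ring]
    rw [Real.rpow_intCast]
  have hqpos : ∀ e ∈ D0 ∪ D1, (0:ℝ) < (q e : ℝ) := fun e he => by
    exact_mod_cast (hprime e he).pos
  -- bound on t ^ S1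
  have hS1 : t ^ (∑ e ∈ D1, ℓ e) ≤ (∏ e ∈ D1, (q e : ℝ)) * t ^ D1.card := by
    rw [← hzs]
    calc ∏ e ∈ D1, t ^ (ℓ e) ≤ ∏ e ∈ D1, ((q e : ℝ) * t) := by
          refine Finset.prod_le_prod (fun e _ => ?_) (fun e he => ?_)
          · positivity
          · exact (happrox e (Finset.mem_union_right _ he)).2
      _ = (∏ e ∈ D1, (q e : ℝ)) * t ^ D1.card := by
          rw [Finset.prod_mul_distrib, Finset.prod_const]
  have hS0 : (∏ e ∈ D0, (q e : ℝ)) / t ^ D0.card ≤ t ^ (∑ e ∈ D0, ℓ e) := by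
    rw [← hzs]
    calc (∏ e ∈ D0, (q e : ℝ)) / t ^ D0.card
        = ∏ e ∈ D0, ((q e : ℝ) / t) := by
          rw [Finset.prod_div_distrib, Finset.prod_const]
      _ ≤ ∏ e ∈ D0, t ^ (ℓ e) := by
          refine Finset.prod_le_prod (fun e he => ?_) (fun e he => ?_)
          · have := hqpos e (Finset.mem_union_left _ he); positivity
          · exact (happrox e (Finset.mem_union_left _ he)).1
  -- product bounds
  set P0 : ℕ := ∏ e ∈ D0, q e with hP0
  set P1 : ℕ := ∏ e ∈ D1, q e with hP1
  have hP0P1 : (P1 : ℝ) + 1 ≤ (P0 : ℝ) := by exact_mod_cast hprod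
  set C : ℕ := (⌈Q⌉₊) ^ (2 * n) with hCdef
  have hC4 : 4 ≤ (C : ℝ) := by
    have : 2 ^ (2*n) ≤ C := Nat.pow_le_pow_left hceil2 _
    have h4 : 4 ≤ 2 ^ (2*n) := by
      calc 4 = 2 ^ 2 := by norm_num
        _ ≤ 2 ^ (2*n) := Nat.pow_le_pow_right (by norm_num) (by omega)
    exact_mod_cast h4.trans this
  have hP1C : (P1 : ℝ) ≤ (C : ℝ) := by
    have h1 : P1 ≤ (⌈Q⌉₊) ^ D1.card := by
      rw [hP1]
      calc ∏ e ∈ D1, q e ≤ ∏ _e ∈ D1, ⌈Q⌉₊ := by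
            refine Finset.prod_le_prod' (fun e he => ?_)
            have hq := hqQ e (Finset.mem_union_right _ he)
            have := hq.trans (Nat.le_ceil Q)
            exact_mod_cast this
        _ = (⌈Q⌉₊) ^ D1.card := Finset.prod_const _
    have h2 : (⌈Q⌉₊) ^ D1.card ≤ C := Nat.pow_le_pow_right (by omega) (by omega)
    exact_mod_cast h1.trans h2
  have hP1pos : (1:ℝ) ≤ (P1 : ℝ) := by
    have : 0 < P1 := Finset.prod_pos fun e he => (hprime e (Finset.mem_union_right _ he)).pos
    exact_mod_cast this
  -- key bound : t ^ (2n) ≤ 1/(1 - 1/(4C))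
  have hLC : (L' : ℝ) = 8 * n * (C : ℝ) := by rw [hL', hCdef]; push_cast; ring
  have hnR : (1:ℝ) ≤ (n : ℝ) := by exact_mod_cast hn
  have hCpos : (0:ℝ) < (C:ℝ) := by linarith
  set y : ℝ := 1 / (4 * (C:ℝ)) with hy
  have hy_eq : (2 * n) * (1 / (L' : ℝ)) = y := by
    rw [hLC, hy]; field_simp; ring
  have hy_pos : 0 < y := by rw [hy]; positivity
  have hy_lt : y ≤ 1/16 := by
    rw [hy]
    rw [div_le_div_iff₀ (by linarith) (by norm_num)]
    linarith
  have hexp1 : t ≤ Real.exp (1 / (L' : ℝ)) := by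
    rw [ht]
    have := Real.add_one_le_exp (1 / (L' : ℝ))
    linarith
  have hT1 : t ^ (2 * n) ≤ Real.exp y := by
    calc t ^ (2*n) ≤ (Real.exp (1 / (L' : ℝ))) ^ (2*n) :=
          pow_le_pow_left₀ (le_of_lt ht0) hexp1 _
      _ = Real.exp ((2*n) * (1 / (L' : ℝ))) := by
          rw [← Real.exp_nat_mul]; push_cast; ring_nf
      _ = Real.exp y := by rw [hy_eq]
  have hT2 : Real.exp y ≤ 1 / (1 - y) := by
    have h1 : 1 - y ≤ Real.exp (-y) := by
      have := Real.add_one_le_exp (-y); linarith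
    have h2 : 0 < 1 - y := by linarith
    rw [le_div_iff₀ h2]
    calc Real.exp y * (1 - y) ≤ Real.exp y * Real.exp (-y) := by
          have := Real.exp_pos y; nlinarith
      _ = Real.exp (y + -y) := (Real.exp_add _ _).symm
      _ = 1 := by simp
  have hT : t ^ (2*n) ≤ 1 / (1 - y) := hT1.trans hT2
  -- P1 * t^(2n) < P0
  have hmain : (P1 : ℝ) * t ^ (2*n) < (P0 : ℝ) := by
    have h2 : 0 < 1 - y := by linarith
    have h3 : (P1:ℝ) * t^(2*n) ≤ (P1:ℝ) * (1/(1-y)) := by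
      apply mul_le_mul_of_nonneg_left hT (by linarith)
    have h4 : (P1:ℝ) * (1/(1-y)) < (P1:ℝ) + 1 := by
      rw [mul_one_div, div_lt_iff₀ h2]
      have hyC : y * (4 * (C:ℝ)) = 1 := by rw [hy]; field_simp
      nlinarith
    linarith
  -- combine
  have htpow : t ^ D1.card ≤ t ^ n := pow_le_pow_right₀ (le_of_lt ht1) hcard1
  have htpow0 : t ^ D0.card ≤ t ^ n := pow_le_pow_right₀ (le_of_lt ht1) hcard0
  have htn : (0:ℝ) < t ^ n := pow_pos ht0 n
  have htc0 : (0:ℝ) < t ^ D0.card := pow_pos ht0 _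
  have hP1R : (∏ e ∈ D1, (q e : ℝ)) = (P1 : ℝ) := by rw [hP1]; push_cast; ring
  have hP0R : (∏ e ∈ D0, (q e : ℝ)) = (P0 : ℝ) := by rw [hP0]; push_cast; ring
  have hchain : t ^ (∑ e ∈ D1, ℓ e) < t ^ (∑ e ∈ D0, ℓ e) := by
    calc t ^ (∑ e ∈ D1, ℓ e) ≤ (P1 : ℝ) * t ^ D1.card := by rw [← hP1R]; exact hS1
      _ ≤ (P1 : ℝ) * t ^ n := by
          apply mul_le_mul_of_nonneg_left htpow (by linarith)
      _ < (P0 : ℝ) / t ^ n := by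
          rw [lt_div_iff₀ htn]
          calc (P1:ℝ) * t ^ n * t ^ n = (P1:ℝ) * t ^ (2*n) := by
                rw [mul_assoc, ← pow_add, two_mul]
            _ < (P0:ℝ) := hmain
      _ ≤ (P0 : ℝ) / t ^ D0.card := by
          apply div_le_div_of_nonneg_left (by positivity) htc0 htpow0
      _ ≤ t ^ (∑ e ∈ D0, ℓ e) := by rw [← hP0R]; exact hS0
  exact (zpow_lt_zpow_iff_right₀ ht1).mp hchain
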